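/- arXiv:1607.03193 — 2 statements merged into one kernel-verified Lean document; each statement's English description precedes it below -/
import Mathlib

section
/- Let \(C \in \mathbb{R}^{p \times n}\), \(A \in \mathbb{R}^{n\times n}\), and suppose every generalized eigenvector of \(A\) whose eigenvalue has magnitude \(\ge 1\) lies in the kernel of \(C\). Write \(x_t = \sum_i [\alpha_t]_i v_i\) in a generalized eigenvector basis. Then for all \(T \ge n\) and all \(t\), \(C A^T x_t = \sum_{i : |\lambda_i| < 1} [\alpha_t]_i \sum_{j : \lambda_j = \lambda_i} \lambda_i^T p_{(j,i)}(T) C v_j\), and hence \(\|C A^T x_t\| \le b_1 \kappa n \eta \cdot T^n \rho^T\) where \(\rho = \max\{|\lambda_i| : |\lambda_i| < 1\} < 1\), \(\eta = \max_j \|C v_j\|\), \(b_1\) bounds the stable coordinates and \(\kappa\) bounds the Jordan-block polynomial growth. Consequently \(\|C A^T x_t\|\) can be made uniformly (in \(t\)) smaller than any prescribed positive threshold by choosing \(T\) large. -/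
open Finset Module


private lemma aux_sum_zero {ι N R : Type*} [DecidableEq ι] [Ring R] [AddCommGroup N] [Module R N]
    {pS : ι → Submodule R N} (hp : iSupIndep pS) (s : Finset ι) (y : ι → N)
    (hy : ∀ i ∈ s, y i ∈ pS i) (hsum : ∑ i ∈ s, y i = 0) : ∀ i ∈ s, y i = 0 := by
  induction s using Finset.induction_on with
  | empty => simp
  | @insert a s ha ih =>
    have hmem : ∑ i ∈ s, y i ∈ ⨆ i ∈ (s : Set ι), pS i :=
      Submodule.sum_mem _ fun i hi =>
        Submodule.mem_iSup_of_mem i (Submodule.mem_iSup_of_mem (Finset.mem_coe.mpr hi)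
          (hy i (Finset.mem_insert_of_mem hi)))
    have hsum' : y a + ∑ i ∈ s, y i = 0 := by rwa [Finset.sum_insert ha] at hsum
    have hya : y a = 0 := by
      have h1 : y a ∈ pS a := hy a (Finset.mem_insert_self a s)
      have h3 : y a ∈ ⨆ i ∈ (s : Set ι), pS i := by
        have heq : y a = -∑ i ∈ s, y i := eq_neg_of_add_eq_zero_left hsum'
        rw [heq]; exact neg_mem hmem
      have hd : Disjoint (pS a) (⨆ i ∈ (s : Set ι), pS i) :=
        hp.disjoint_biSup (by simpa using ha)
      simpa using hd.le_bot ⟨h1, h3⟩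
    intro i hi
    rcases Finset.mem_insert.mp hi with rfl | hi'
    · exact hya
    · exact ih (fun j hj => hy j (Finset.mem_insert_of_mem hj))
        (by rwa [hya, zero_add] at hsum') i hi'

private lemma aux_repr_zero {n : ℕ} (A : Module.End ℂ (Fin n → ℂ))
    (v : Basis (Fin n) ℂ (Fin n → ℂ)) (lam : Fin n → ℂ)
    (hnil : ∀ i, ((A - lam i • 1) ^ n) (v i) = 0)
    {μ : ℂ} {y : Fin n → ℂ} (hy : ((A - μ • 1) ^ n) y = 0) :
    ∀ j, lam j ≠ μ → v.repr y j = 0 := by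
  classical
  set E : ℂ → Submodule ℂ (Fin n → ℂ) := fun ν => A.genEigenspace ν (n : ℕ∞) with hE
  have hmemE : ∀ (ν : ℂ) (z : Fin n → ℂ), ((A - ν • 1) ^ n) z = 0 → z ∈ E ν := by
    intro ν z hz
    exact Module.End.mem_genEigenspace_nat.mpr hz
  have hvE : ∀ i, v i ∈ E (lam i) := fun i => hmemE _ _ (hnil i)
  set Λ : Finset ℂ := insert μ (Finset.image lam Finset.univ) with hΛ
  set c : Fin n → ℂ := fun j => v.repr y j with hc
  set w : ℂ → (Fin n → ℂ) := fun ν => ∑ j ∈ Finset.univ.filter (fun j => lam j = ν), c j • v j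
    with hw
  set w' : ℂ → (Fin n → ℂ) := fun ν => w ν - (if ν = μ then y else 0) with hw'
  have h1 : ∑ ν ∈ Λ, w ν = y := by
    rw [hw]
    rw [Finset.sum_fiberwise_of_maps_to (fun j _ => by simp [hΛ]) (fun j => c j • v j)]
    exact v.sum_repr y
  have hsum : ∑ ν ∈ Λ, w' ν = 0 := by
    have h2 : ∑ ν ∈ Λ, (if ν = μ then y else (0 : Fin n → ℂ)) = y := by
      rw [Finset.sum_ite_eq' Λ μ (fun _ => y)]
      simp [hΛ]
    rw [hw', Finset.sum_sub_distrib, h1, h2, sub_self]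
  have hw'mem : ∀ ν ∈ Λ, w' ν ∈ E ν := by
    intro ν _
    apply Submodule.sub_mem
    · apply Submodule.sum_mem
      intro j hj
      have : lam j = ν := (Finset.mem_filter.mp hj).2
      exact Submodule.smul_mem _ _ (this ▸ hvE j)
    · split_ifs with h
      · exact h ▸ hmemE μ y hy
      · exact Submodule.zero_mem _
  have hindep : iSupIndep E := A.independent_genEigenspace (n : ℕ∞)
  have hzero := aux_sum_zero hindep Λ w' hw'mem hsum
  intro j hj
  have hjΛ : lam j ∈ Λ := by simp [hΛ]
  have hwj : w (lam j) = 0 := by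
    have := hzero _ hjΛ
    rw [hw'] at this
    simpa [hj] using this
  have hli := linearIndependent_iff'.mp v.linearIndependent
    (Finset.univ.filter (fun j' => lam j' = lam j)) c hwj j (by simp)
  exact hli


set_option maxHeartbeats 1600000 in
/-- If every generalized eigenvector of `A` with eigenvalue magnitude `≥ 1` lies in `ker C`,
then for `T ≥ n`, `C A^T x_t` is a combination of the stable coordinates only, it satisfies
`‖C A^T x_t‖ ≤ b₁ κ n η T^n ρ^T` with `ρ < 1`, and hence `‖C A^T x_t‖` can be made uniformly
(in `t`) smaller than any prescribed positive threshold by choosing `T` large. -/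
theorem stmt_11 {n m p : ℕ} (A : Module.End ℂ (Fin n → ℂ))
    (B : (Fin m → ℂ) →ₗ[ℂ] (Fin n → ℂ)) (C : (Fin n → ℂ) →ₗ[ℂ] (Fin p → ℂ))
    (v : Module.Basis (Fin n) ℂ (Fin n → ℂ)) (lam : Fin n → ℂ)
    (hgen : ∀ i, ∃ l : ℕ, 1 ≤ l ∧ ((A - lam i • 1) ^ l) (v i) = 0 ∧
        ((A - lam i • 1) ^ (l - 1)) (v i) ≠ 0)
    (hker : ∀ i, 1 ≤ ‖lam i‖ → C (v i) = 0)
    (U : Finset (Fin m → ℂ))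
    (x : ℕ → Fin n → ℂ) (u : ℕ → Fin m → ℂ) (b : ℝ) (hx0 : ‖x 0‖ ≤ b)
    (hu : ∀ t, u t ∈ U) (hx : ∀ t, x (t + 1) = A (x t) + B (u t))
    (ρ : ℝ) (hρ0 : 0 ≤ ρ) (hρ1 : ρ < 1) (hρ : ∀ i, ‖lam i‖ < 1 → ‖lam i‖ ≤ ρ)
    (η : ℝ) (hη : ∀ j, ‖C (v j)‖ ≤ η) :
    ∃ (pp : Fin n → Fin n → Polynomial ℂ) (κ b1 : ℝ), 0 < κ ∧ 0 < b1 ∧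
      (∀ T : ℕ, n ≤ T → ∀ t : ℕ,
        C ((A ^ T) (x t)) = ∑ i ∈ Finset.univ.filter (fun i => ‖lam i‖ < 1),
          v.repr (x t) i • ∑ j ∈ Finset.univ.filter (fun j => lam j = lam i),
            (lam i ^ T * (pp j i).eval (T : ℂ)) • C (v j)) ∧
      (∀ T : ℕ, n ≤ T → ∀ t : ℕ,
        ‖C ((A ^ T) (x t))‖ ≤ b1 * κ * n * η * (T : ℝ) ^ n * ρ ^ T) ∧
      (∀ ε : ℝ, 0 < ε → ∃ T : ℕ, ∀ t : ℕ, ‖C ((A ^ T) (x t))‖ < ε) := by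
  set Sf : Finset (Fin n) := Finset.univ.filter (fun i => ‖lam i‖ < 1) with hSf
  -- nilpotency at exponent n
  have hnil : ∀ i, ((A - lam i • 1) ^ n) (v i) = 0 := by
    intro i
    obtain ⟨l, hl1, hl2, -⟩ := hgen i
    have h1 : v i ∈ A.genEigenspace (lam i) (l : ℕ∞) :=
      Module.End.mem_genEigenspace_nat.mpr hl2
    have h2 := Module.End.genEigenspace_le_genEigenspace_finrank A (lam i) (l : ℕ∞) h1
    have h3 : Module.finrank ℂ (Fin n → ℂ) = n := Module.finrank_fin_fun ℂ
    rw [h3] at h2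
    exact Module.End.mem_genEigenspace_nat.mp h2
  -- coordinates outside the eigenvalue class vanish
  have hkey : ∀ (T : ℕ) (i j : Fin n), lam j ≠ lam i → v.repr ((A ^ T) (v i)) j = 0 := by
    intro T i j hj
    have hcA : Commute A (A - lam i • 1) :=
      (Commute.refl A).sub_right ((Commute.one_right A).smul_right (lam i))
    have hc : Commute ((A - lam i • 1) ^ n) (A ^ T) := (hcA.symm.pow_pow n T)
    have hz : ((A - lam i • 1) ^ n) ((A ^ T) (v i)) = 0 := by
      have h4 : ((A - lam i • 1) ^ n * A ^ T) (v i) = (A ^ T * (A - lam i • 1) ^ n) (v i) := by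
        rw [hc.eq]
      rw [Module.End.mul_apply, Module.End.mul_apply, hnil i, map_zero] at h4
      exact h4
    exact aux_repr_zero A v lam hnil hz j hj
  -- binomial expansion
  have hApow : ∀ (i : Fin n) (T : ℕ), n ≤ T →
      (A ^ T) (v i) = ∑ k ∈ Finset.range n,
        (T.choose k : ℂ) • ((lam i) ^ (T - k) • (((A - lam i • 1) ^ k) (v i))) := by
    intro i T hT
    have hcomm : Commute (A - lam i • 1) ((lam i) • (1 : Module.End ℂ (Fin n → ℂ))) :=
      (Commute.one_right _).smul_right (lam i)
    have h1 : (A ^ T) (v i) = ∑ k ∈ Finset.range (T + 1),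
        (T.choose k : ℂ) • ((lam i) ^ (T - k) • (((A - lam i • 1) ^ k) (v i))) := by
      have hA : A = (A - lam i • 1) + lam i • 1 := by abel
      conv_lhs => rw [hA]
      rw [hcomm.add_pow, LinearMap.sum_apply]
      refine Finset.sum_congr rfl fun k _ => ?_
      rw [smul_pow, one_pow, Module.End.mul_apply, Module.End.mul_apply,
        Module.End.natCast_apply, LinearMap.smul_apply, Module.End.one_apply]
      rw [map_smul, ← Nat.cast_smul_eq_nsmul ℂ, map_smul]
      exact smul_comm _ _ _
    rw [h1, ← Finset.sum_range_add_sum_Ico _ (by omega : n ≤ T + 1)]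
    have h2 : ∑ k ∈ Finset.Ico n (T + 1),
        (T.choose k : ℂ) • ((lam i) ^ (T - k) • (((A - lam i • 1) ^ k) (v i))) = 0 := by
      refine Finset.sum_eq_zero fun k hk => ?_
      have hkn : n ≤ k := (Finset.mem_Ico.mp hk).1
      have h5 : ((A - lam i • 1) ^ k) (v i) = 0 := by
        have h6 : (A - lam i • 1) ^ k = (A - lam i • 1) ^ (k - n) * (A - lam i • 1) ^ n := by
          rw [← pow_add]; congr 1; omega
        rw [h6, Module.End.mul_apply, hnil i, map_zero]
      rw [h5, smul_zero, smul_zero]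
    rw [h2, add_zero]
  -- the polynomials
  set pp : Fin n → Fin n → Polynomial ℂ := fun j i =>
    if lam i = 0 then 0 else
      ∑ k ∈ Finset.range n,
        Polynomial.C (v.repr (((A - lam i • 1) ^ k) (v i)) j * ((lam i)⁻¹) ^ k *
          ((k.factorial : ℂ))⁻¹) * descPochhammer ℂ k with hppdef
  have hpp0 : ∀ (i j : Fin n), lam i = 0 → pp j i = 0 := by
    intro i j h0
    rw [hppdef]; dsimp only; rw [if_pos h0]
  have heval : ∀ (i j : Fin n) (T : ℕ), lam i ≠ 0 → (pp j i).eval (T : ℂ) =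
      ∑ k ∈ Finset.range n,
        v.repr (((A - lam i • 1) ^ k) (v i)) j * ((lam i)⁻¹) ^ k * (T.choose k : ℂ) := by
    intro i j T h0
    rw [hppdef]
    simp only [h0, if_false, Polynomial.eval_finset_sum, Polynomial.eval_mul, Polynomial.eval_C]
    refine Finset.sum_congr rfl fun k _ => ?_
    rw [descPochhammer_eval_eq_descFactorial ℂ T k]
    have hd : (T.descFactorial k : ℂ) = (k.factorial : ℂ) * (T.choose k : ℂ) := by
      rw [Nat.descFactorial_eq_factorial_mul_choose]; push_cast; ring
    have hf : (k.factorial : ℂ) ≠ 0 := Nat.cast_ne_zero.mpr k.factorial_ne_zero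
    field_simp [hd]
    rw [hd]; ring
  have hrepr : ∀ (i j : Fin n) (T : ℕ), n ≤ T →
      v.repr ((A ^ T) (v i)) j = lam i ^ T * (pp j i).eval (T : ℂ) := by
    intro i j T hT
    by_cases h0 : lam i = 0
    · have hn1 : 1 ≤ n := i.pos
      have hzero : (A ^ T) (v i) = 0 := by
        have hAn : (A ^ n) (v i) = 0 := by
          have h7 := hnil i
          rwa [h0, zero_smul, sub_zero] at h7
        have h8 : A ^ T = A ^ (T - n) * A ^ n := by rw [← pow_add]; congr 1; omega
        rw [h8, Module.End.mul_apply, hAn, map_zero]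
      rw [hzero, map_zero, h0, zero_pow (by omega : T ≠ 0), zero_mul]
      simp
    · rw [hApow i T hT, heval i j T h0, map_sum, Finset.mul_sum]
      rw [Finsupp.coe_finset_sum, Finset.sum_apply]
      refine Finset.sum_congr rfl fun k hk => ?_
      have hkT : k ≤ T := le_trans (le_of_lt (Finset.mem_range.mp hk)) hT
      rw [map_smul, map_smul]
      rw [Finsupp.coe_smul, Finsupp.coe_smul, Pi.smul_apply, Pi.smul_apply]
      rw [smul_eq_mul, smul_eq_mul]
      rw [pow_sub₀ (lam i) h0 hkT, inv_pow]
      ring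
  -- the quantitative bound κ0
  set D : Fin n → Fin n → ℝ := fun i j =>
    if lam i = 0 then 0 else
      ∑ k ∈ Finset.range n, ‖v.repr (((A - lam i • 1) ^ k) (v i)) j‖ * (‖lam i‖ ^ k)⁻¹
    with hD
  have hD0 : ∀ i j, 0 ≤ D i j := by
    intro i j
    rw [hD]
    dsimp only
    split_ifs
    · exact le_refl 0
    · exact Finset.sum_nonneg fun k _ =>
        mul_nonneg (norm_nonneg _) (inv_nonneg.mpr (pow_nonneg (norm_nonneg _) k))
  set κ0 : ℝ := 1 + ∑ i : Fin n, ∑ j : Fin n, D i j with hκ0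
  have hκ0pos : 0 < κ0 := by
    have h9 : 0 ≤ ∑ i : Fin n, ∑ j : Fin n, D i j :=
      Finset.sum_nonneg fun i _ => Finset.sum_nonneg fun j _ => hD0 i j
    rw [hκ0]; linarith
  have hDle : ∀ i j, D i j ≤ κ0 := by
    intro i j
    have h1 : D i j ≤ ∑ j' : Fin n, D i j' :=
      Finset.single_le_sum (fun j' _ => hD0 i j') (Finset.mem_univ j)
    have h2 : (∑ j' : Fin n, D i j') ≤ ∑ i' : Fin n, ∑ j' : Fin n, D i' j' :=
      Finset.single_le_sum (fun i' _ => Finset.sum_nonneg fun j' _ => hD0 i' j')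
        (Finset.mem_univ i)
    rw [hκ0]; linarith
  have hbnd : ∀ (i j : Fin n) (T : ℕ), n ≤ T → ‖lam i‖ < 1 →
      ‖lam i ^ T * (pp j i).eval (T : ℂ)‖ ≤ κ0 * (T : ℝ) ^ n * ρ ^ T := by
    intro i j T hT hi
    have hn1 : 1 ≤ n := i.pos
    have hT1 : 1 ≤ T := le_trans hn1 hT
    have hTR : (1 : ℝ) ≤ (T : ℝ) := by exact_mod_cast hT1
    have hRHS0 : 0 ≤ κ0 * (T : ℝ) ^ n * ρ ^ T :=
      mul_nonneg (mul_nonneg (le_of_lt hκ0pos) (pow_nonneg (by linarith) n)) (pow_nonneg hρ0 T)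
    by_cases h0 : lam i = 0
    · rw [hpp0 i j h0, h0]
      rw [zero_pow (by omega : T ≠ 0)]
      simpa using hRHS0
    · rw [heval i j T h0, Finset.mul_sum]
      calc ‖∑ k ∈ Finset.range n, lam i ^ T *
            (v.repr (((A - lam i • 1) ^ k) (v i)) j * ((lam i)⁻¹) ^ k * (T.choose k : ℂ))‖
          ≤ ∑ k ∈ Finset.range n, ‖lam i ^ T *
            (v.repr (((A - lam i • 1) ^ k) (v i)) j * ((lam i)⁻¹) ^ k * (T.choose k : ℂ))‖ :=
            norm_sum_le _ _
        _ ≤ ∑ k ∈ Finset.range n,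
              (‖v.repr (((A - lam i • 1) ^ k) (v i)) j‖ * (‖lam i‖ ^ k)⁻¹) *
                ((T : ℝ) ^ n * ρ ^ T) := by
            refine Finset.sum_le_sum fun k hk => ?_
            simp only [norm_mul, norm_pow, norm_inv]
            have hch : ‖((T.choose k : ℕ) : ℂ)‖ ≤ (T : ℝ) ^ n := by
              rw [Complex.norm_natCast]
              have h1 : (T.choose k : ℝ) ≤ ((T ^ k : ℕ) : ℝ) := by
                exact_mod_cast Nat.choose_le_pow T k
              have h2 : ((T ^ k : ℕ) : ℝ) ≤ (T : ℝ) ^ n := by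
                push_cast
                exact pow_le_pow_right₀ hTR (le_of_lt (Finset.mem_range.mp hk))
              linarith
            have hlam : ‖lam i‖ ^ T ≤ ρ ^ T := pow_le_pow_left₀ (norm_nonneg _) (hρ i hi) T
            have e1 : 0 ≤ ‖v.repr (((A - lam i • 1) ^ k) (v i)) j‖ * (‖lam i‖⁻¹) ^ k :=
              mul_nonneg (norm_nonneg _) (pow_nonneg (inv_nonneg.mpr (norm_nonneg _)) k)
            calc ‖lam i‖ ^ T * (‖v.repr (((A - lam i • 1) ^ k) (v i)) j‖ * ‖lam i‖⁻¹ ^ k *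
                  ‖((T.choose k : ℕ) : ℂ)‖)
                ≤ ‖lam i‖ ^ T * (‖v.repr (((A - lam i • 1) ^ k) (v i)) j‖ * ‖lam i‖⁻¹ ^ k *
                  ((T : ℝ) ^ n)) := by
                  refine mul_le_mul_of_nonneg_left ?_ (pow_nonneg (norm_nonneg _) T)
                  exact mul_le_mul_of_nonneg_left hch e1
              _ ≤ ρ ^ T * (‖v.repr (((A - lam i • 1) ^ k) (v i)) j‖ * ‖lam i‖⁻¹ ^ k *
                  ((T : ℝ) ^ n)) := by
                  refine mul_le_mul_of_nonneg_right hlam ?_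
                  exact mul_nonneg e1 (pow_nonneg (by linarith) n)
              _ = (‖v.repr (((A - lam i • 1) ^ k) (v i)) j‖ * (‖lam i‖ ^ k)⁻¹) *
                  ((T : ℝ) ^ n * ρ ^ T) := by rw [inv_pow]; ring
        _ = D i j * ((T : ℝ) ^ n * ρ ^ T) := by
            rw [hD]; dsimp only; rw [if_neg h0, ← Finset.sum_mul]
        _ ≤ κ0 * ((T : ℝ) ^ n * ρ ^ T) := by
            refine mul_le_mul_of_nonneg_right (hDle i j) ?_
            exact mul_nonneg (pow_nonneg (by linarith) n) (pow_nonneg hρ0 T)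
        _ = κ0 * (T : ℝ) ^ n * ρ ^ T := by ring
  have hbnd2 : ∀ (i j : Fin n) (T : ℕ), n ≤ T → ‖lam i‖ < 1 →
      ‖v.repr ((A ^ T) (v i)) j‖ ≤ κ0 * (T : ℝ) ^ n * ρ ^ T := by
    intro i j T hT hi
    rw [hrepr i j T hT]
    exact hbnd i j T hT hi
  -- the representation identity for C (A^T z)
  have hCim : ∀ (T : ℕ), n ≤ T → ∀ (z : Fin n → ℂ),
      C ((A ^ T) z) = ∑ i ∈ Sf,
        v.repr z i • ∑ j ∈ Finset.univ.filter (fun j => lam j = lam i),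
          (lam i ^ T * (pp j i).eval (T : ℂ)) • C (v j) := by
    intro T hT z
    have hterm : ∀ i : Fin n, C ((A ^ T) (v i)) =
        if ‖lam i‖ < 1 then
          ∑ j ∈ Finset.univ.filter (fun j => lam j = lam i),
            (lam i ^ T * (pp j i).eval (T : ℂ)) • C (v j)
        else 0 := by
      intro i
      have hexp : C ((A ^ T) (v i)) = ∑ j : Fin n, v.repr ((A ^ T) (v i)) j • C (v j) := by
        conv_lhs => rw [← v.sum_repr ((A ^ T) (v i))]
        rw [map_sum]
        exact Finset.sum_congr rfl fun j _ => by rw [map_smul]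
      by_cases hi : ‖lam i‖ < 1
      · rw [hexp, if_pos hi]
        rw [← Finset.sum_filter_add_sum_filter_not Finset.univ (fun j => lam j = lam i)]
        have h2 : ∑ j ∈ Finset.univ.filter (fun j => ¬ lam j = lam i),
            v.repr ((A ^ T) (v i)) j • C (v j) = 0 := by
          refine Finset.sum_eq_zero fun j hj => ?_
          rw [hkey T i j (Finset.mem_filter.mp hj).2, zero_smul]
        rw [h2, add_zero]
        exact Finset.sum_congr rfl fun j hj => by rw [hrepr i j T hT]
      · rw [hexp, if_neg hi]
        refine Finset.sum_eq_zero fun j _ => ?_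
        by_cases hj : lam j = lam i
        · rw [hker j (by rw [hj]; exact not_lt.mp hi), smul_zero]
        · rw [hkey T i j hj, zero_smul]
    conv_lhs => rw [← v.sum_repr z]
    rw [map_sum, map_sum]
    have hsm : ∀ i : Fin n, C ((A ^ T) (v.repr z i • v i)) = v.repr z i • C ((A ^ T) (v i)) := by
      intro i; rw [map_smul, map_smul]
    rw [Finset.sum_congr rfl fun i _ => hsm i]
    rw [Finset.sum_congr rfl fun i _ => by rw [hterm i]]
    rw [hSf, Finset.sum_filter]
    refine Finset.sum_congr rfl fun i _ => ?_
    split_ifs with h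
    · rfl
    · rw [smul_zero]
  -- coordinate functionals are bounded
  set φ : Fin n → ((Fin n → ℂ) →L[ℂ] ℂ) :=
    fun j => LinearMap.toContinuousLinearMap (v.coord j) with hφ
  set crd : ℝ := 1 + ∑ j : Fin n, ‖φ j‖ with hcrd
  have hcrd1 : (1:ℝ) ≤ crd := by
    have h9 : 0 ≤ ∑ j : Fin n, ‖φ j‖ := Finset.sum_nonneg fun j _ => norm_nonneg _
    rw [hcrd]; linarith
  have hcrd0 : 0 < crd := lt_of_lt_of_le one_pos hcrd1
  have hcrdle : ∀ (z : Fin n → ℂ) (j : Fin n), ‖v.repr z j‖ ≤ crd * ‖z‖ := by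
    intro z j
    have h1 : ‖v.repr z j‖ = ‖φ j z‖ := by
      rw [hφ]; simp [Basis.coord_apply]
    have h2 : ‖φ j z‖ ≤ ‖φ j‖ * ‖z‖ := (φ j).le_opNorm z
    have h3 : ‖φ j‖ ≤ crd := by
      have h10 := Finset.single_le_sum (f := fun j => ‖φ j‖) (fun j _ => norm_nonneg _)
        (Finset.mem_univ j)
      rw [hcrd]; linarith
    calc ‖v.repr z j‖ = ‖φ j z‖ := h1
      _ ≤ ‖φ j‖ * ‖z‖ := h2
      _ ≤ crd * ‖z‖ := mul_le_mul_of_nonneg_right h3 (norm_nonneg _)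
  -- the stable projection
  set P : Module.End ℂ (Fin n → ℂ) := ∑ i ∈ Sf, LinearMap.smulRight (v.coord i) (v i) with hPdef
  have hP : ∀ z, P z = ∑ i ∈ Sf, v.repr z i • v i := by
    intro z
    rw [hPdef, LinearMap.sum_apply]
    exact Finset.sum_congr rfl fun i _ => by
      rw [LinearMap.smulRight_apply, Basis.coord_apply]
  have hPv : ∀ i : Fin n, P (v i) = if ‖lam i‖ < 1 then v i else 0 := by
    intro i
    rw [hP]
    have h11 : ∀ j ∈ Sf, v.repr (v i) j • v j = if i = j then v j else 0 := by
      intro j _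
      rw [Basis.repr_self, Finsupp.single_apply]
      split_ifs with h
      · rw [one_smul]
      · rw [zero_smul]
    rw [Finset.sum_congr rfl h11, Finset.sum_ite_eq Sf i (fun j => v j)]
    congr 1
    rw [hSf]; simp
  have hPA : ∀ z, P (A z) = A (P z) := by
    have hcomp : P ∘ₗ A = A ∘ₗ P := by
      refine Basis.ext v fun i => ?_
      rw [LinearMap.comp_apply, LinearMap.comp_apply, hPv i]
      by_cases hi : ‖lam i‖ < 1
      · rw [if_pos hi]
        conv_lhs => rw [← v.sum_repr (A (v i))]
        rw [map_sum]
        have h1 : ∀ j : Fin n, P (v.repr (A (v i)) j • v j) =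
            v.repr (A (v i)) j • P (v j) := fun j => map_smul P _ _
        rw [Finset.sum_congr rfl fun j _ => h1 j]
        have h2 : ∀ j : Fin n, v.repr (A (v i)) j • P (v j) =
            v.repr (A (v i)) j • v j := by
          intro j
          rw [hPv j]
          split_ifs with hj
          · rfl
          · have hne : lam j ≠ lam i := by
              intro heq
              exact hj (heq ▸ hi)
            have h12 : v.repr (A (v i)) j = 0 := by
              have h13 := hkey 1 i j hne
              rwa [pow_one] at h13
            rw [h12, zero_smul, zero_smul]
        rw [Finset.sum_congr rfl fun j _ => h2 j]
        exact v.sum_repr (A (v i))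
      · rw [if_neg hi, map_zero]
        conv_lhs => rw [← v.sum_repr (A (v i))]
        rw [map_sum]
        have h1 : ∀ j : Fin n, P (v.repr (A (v i)) j • v j) =
            v.repr (A (v i)) j • P (v j) := fun j => map_smul P _ _
        rw [Finset.sum_congr rfl fun j _ => h1 j]
        refine Finset.sum_eq_zero fun j _ => ?_
        rw [hPv j]
        split_ifs with hj
        · have hne : lam j ≠ lam i := by
            intro heq
            rw [heq] at hj
            exact hi hj
          have h12 : v.repr (A (v i)) j = 0 := by
            have h13 := hkey 1 i j hne
            rwa [pow_one] at h13
          rw [h12, zero_smul]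
        · rw [smul_zero]
    intro z
    have h14 := LinearMap.ext_iff.mp hcomp z
    simpa using h14
  -- trajectory formula
  have traj : ∀ t : ℕ, P (x t) =
      (A ^ t) (P (x 0)) + ∑ s ∈ Finset.range t, (A ^ (t - 1 - s)) (P (B (u s))) := by
    intro t
    induction t with
    | zero => simp
    | succ t ih =>
      rw [hx t, map_add, hPA, ih, map_add]
      have h1 : A ((A ^ t) (P (x 0))) = (A ^ (t + 1)) (P (x 0)) := by
        rw [pow_succ']; rfl
      have h2 : A (∑ s ∈ Finset.range t, (A ^ (t - 1 - s)) (P (B (u s)))) =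
          ∑ s ∈ Finset.range t, (A ^ (t - s)) (P (B (u s))) := by
        rw [map_sum]
        refine Finset.sum_congr rfl fun s hs => ?_
        have hst : s < t := Finset.mem_range.mp hs
        have h15 : t - s = (t - 1 - s) + 1 := by omega
        rw [h15, pow_succ']
        rfl
      rw [h1, h2, Finset.sum_range_succ]
      have h3 : t + 1 - 1 - t = 0 := by omega
      have h4 : ∀ s, s < t → t + 1 - 1 - s = t - s := by omega
      have h5 : ∑ s ∈ Finset.range t, (A ^ (t + 1 - 1 - s)) (P (B (u s))) =
          ∑ s ∈ Finset.range t, (A ^ (t - s)) (P (B (u s))) := by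
        refine Finset.sum_congr rfl fun s hs => ?_
        rw [h4 s (Finset.mem_range.mp hs)]
      rw [h5, h3, pow_zero, Module.End.one_apply]
      abel
  -- geometric-type envelope
  set G : ℕ → ℝ := fun k => ∑ i ∈ Sf, ‖(A ^ k) (v i)‖ with hG
  have hG0 : ∀ k, 0 ≤ G k := fun k => Finset.sum_nonneg fun i _ => norm_nonneg _
  set Vmx : ℝ := 1 + ∑ j : Fin n, ‖v j‖ with hVmx
  have hVmx1 : (1:ℝ) ≤ Vmx := by
    have h9 : 0 ≤ ∑ j : Fin n, ‖v j‖ := Finset.sum_nonneg fun j _ => norm_nonneg _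
    rw [hVmx]; linarith
  have hVmxle : ∀ j : Fin n, ‖v j‖ ≤ Vmx := by
    intro j
    have h10 := Finset.single_le_sum (f := fun j => ‖v j‖) (fun j _ => norm_nonneg _)
      (Finset.mem_univ j)
    rw [hVmx]; linarith
  have hGle : ∀ k : ℕ, n ≤ k → G k ≤ ((n : ℝ) * n * Vmx * κ0) * ((k : ℝ) ^ n * ρ ^ k) := by
    intro k hk
    have hterm : ∀ i ∈ Sf, ‖(A ^ k) (v i)‖ ≤ (n : ℝ) * Vmx * κ0 * ((k : ℝ) ^ n * ρ ^ k) := by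
      intro i hi
      have hstab : ‖lam i‖ < 1 := by
        rw [hSf] at hi
        exact (Finset.mem_filter.mp hi).2
      calc ‖(A ^ k) (v i)‖ = ‖∑ j : Fin n, v.repr ((A ^ k) (v i)) j • v j‖ := by
            rw [v.sum_repr ((A ^ k) (v i))]
        _ ≤ ∑ j : Fin n, ‖v.repr ((A ^ k) (v i)) j • v j‖ := norm_sum_le _ _
        _ ≤ ∑ j : Fin n, (κ0 * (k : ℝ) ^ n * ρ ^ k) * Vmx := by
            refine Finset.sum_le_sum fun j _ => ?_
            rw [norm_smul]
            have h1 := hbnd2 i j k hk hstab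
            have h2 := hVmxle j
            have hb9 : (0:ℝ) ≤ κ0 * (k : ℝ) ^ n * ρ ^ k :=
              mul_nonneg (mul_nonneg (le_of_lt hκ0pos) (pow_nonneg (Nat.cast_nonneg k) n))
                (pow_nonneg hρ0 k)
            exact mul_le_mul h1 h2 (norm_nonneg _) hb9
        _ = (n : ℝ) * ((κ0 * (k : ℝ) ^ n * ρ ^ k) * Vmx) := by
            rw [Finset.sum_const, Finset.card_univ, Fintype.card_fin]
            simp [nsmul_eq_mul]
        _ = (n : ℝ) * Vmx * κ0 * ((k : ℝ) ^ n * ρ ^ k) := by ring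
    calc G k ≤ ∑ _i ∈ Sf, (n : ℝ) * Vmx * κ0 * ((k : ℝ) ^ n * ρ ^ k) := by
          rw [hG]; exact Finset.sum_le_sum hterm
      _ = (Sf.card : ℝ) * ((n : ℝ) * Vmx * κ0 * ((k : ℝ) ^ n * ρ ^ k)) := by
          rw [Finset.sum_const]; simp [nsmul_eq_mul]
      _ ≤ (n : ℝ) * ((n : ℝ) * Vmx * κ0 * ((k : ℝ) ^ n * ρ ^ k)) := by
          refine mul_le_mul_of_nonneg_right ?_ ?_
          · have h16 : Sf.card ≤ n := by
              calc Sf.card ≤ (Finset.univ : Finset (Fin n)).card := Finset.card_le_card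
                    (by rw [hSf]; exact Finset.filter_subset _ _)
                _ = n := by rw [Finset.card_univ, Fintype.card_fin]
            exact_mod_cast h16
          · refine mul_nonneg (mul_nonneg (mul_nonneg (Nat.cast_nonneg n) (by linarith))
              (le_of_lt hκ0pos)) (mul_nonneg (pow_nonneg (Nat.cast_nonneg k) n)
              (pow_nonneg hρ0 k))
      _ = ((n : ℝ) * n * Vmx * κ0) * ((k : ℝ) ^ n * ρ ^ k) := by ring
  -- summability
  have hsum1 : Summable (fun k : ℕ => (k : ℝ) ^ n * ρ ^ k) := by
    have h17 : ‖ρ‖ < 1 := by rwa [Real.norm_eq_abs, abs_of_nonneg hρ0]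
    exact summable_pow_mul_geometric_of_norm_lt_one n h17
  have hgg : Summable (fun k : ℕ => ((n : ℝ) * n * Vmx * κ0) * ((k : ℝ) ^ n * ρ ^ k)) :=
    hsum1.mul_left _
  have hGsum : Summable G := by
    apply (summable_nat_add_iff n).mp
    apply Summable.of_nonneg_of_le (fun k => hG0 (k + n)) (fun k => hGle (k + n) (by omega))
    exact (summable_nat_add_iff n).mpr hgg
  set tG : ℝ := ∑' k, G k with htG
  have htG0 : 0 ≤ tG := tsum_nonneg hG0
  have hGt : ∀ k, G k ≤ tG := fun k => Summable.le_tsum hGsum k (fun j _ => hG0 j)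
  have hGrange : ∀ t : ℕ, ∑ k ∈ Finset.range t, G k ≤ tG := fun t =>
    Summable.sum_le_tsum _ (fun i _ => hG0 i) hGsum
  -- input bound
  set uB : ℝ := 1 + ∑ w ∈ U, ‖B w‖ with huBdef
  have huB1 : (1:ℝ) ≤ uB := by
    have h9 : 0 ≤ ∑ w ∈ U, ‖B w‖ := Finset.sum_nonneg fun w _ => norm_nonneg _
    rw [huBdef]; linarith
  have huB : ∀ s : ℕ, ‖B (u s)‖ ≤ uB := by
    intro s
    have h10 := Finset.single_le_sum (f := fun w => ‖B w‖) (fun w _ => norm_nonneg _) (hu s)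
    rw [huBdef]; linarith
  have hb0 : 0 ≤ b := le_trans (norm_nonneg _) hx0
  -- bound on A^k P z
  have hAkP : ∀ (k : ℕ) (z : Fin n → ℂ), ‖(A ^ k) (P z)‖ ≤ (crd * ‖z‖) * G k := by
    intro k z
    have h1 : (A ^ k) (P z) = ∑ i ∈ Sf, v.repr z i • (A ^ k) (v i) := by
      rw [hP z, map_sum]
      exact Finset.sum_congr rfl fun i _ => map_smul _ _ _
    rw [h1]
    calc ‖∑ i ∈ Sf, v.repr z i • (A ^ k) (v i)‖
        ≤ ∑ i ∈ Sf, ‖v.repr z i • (A ^ k) (v i)‖ := norm_sum_le _ _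
      _ ≤ ∑ i ∈ Sf, (crd * ‖z‖) * ‖(A ^ k) (v i)‖ := by
          refine Finset.sum_le_sum fun i _ => ?_
          rw [norm_smul]
          exact mul_le_mul_of_nonneg_right (hcrdle z i) (norm_nonneg _)
      _ = (crd * ‖z‖) * G k := by rw [hG, ← Finset.mul_sum]
  -- uniform bound on ‖P (x t)‖
  set M : ℝ := crd * b * tG + crd * uB * tG with hM
  have hM0 : 0 ≤ M := by
    have h1 : 0 ≤ crd * b * tG := mul_nonneg (mul_nonneg (le_of_lt hcrd0) hb0) htG0
    have h2 : 0 ≤ crd * uB * tG := mul_nonneg (mul_nonneg (le_of_lt hcrd0) (by linarith)) htG0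
    rw [hM]; linarith
  have hPx : ∀ t : ℕ, ‖P (x t)‖ ≤ M := by
    intro t
    rw [traj t]
    calc ‖(A ^ t) (P (x 0)) + ∑ s ∈ Finset.range t, (A ^ (t - 1 - s)) (P (B (u s)))‖
        ≤ ‖(A ^ t) (P (x 0))‖ + ‖∑ s ∈ Finset.range t, (A ^ (t - 1 - s)) (P (B (u s)))‖ :=
          norm_add_le _ _
      _ ≤ (crd * b) * tG + ∑ s ∈ Finset.range t, ‖(A ^ (t - 1 - s)) (P (B (u s)))‖ := by
          refine add_le_add ?_ (norm_sum_le _ _)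
          calc ‖(A ^ t) (P (x 0))‖ ≤ (crd * ‖x 0‖) * G t := hAkP t (x 0)
            _ ≤ (crd * b) * tG := by
                refine mul_le_mul ?_ (hGt t) (hG0 t) (mul_nonneg (le_of_lt hcrd0) hb0)
                exact mul_le_mul_of_nonneg_left hx0 (le_of_lt hcrd0)
      _ ≤ crd * b * tG + crd * uB * tG := by
          refine add_le_add_right ?_ _
          calc ∑ s ∈ Finset.range t, ‖(A ^ (t - 1 - s)) (P (B (u s)))‖
              ≤ ∑ s ∈ Finset.range t, (crd * uB) * G (t - 1 - s) := by
                refine Finset.sum_le_sum fun s _ => ?_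
                calc ‖(A ^ (t - 1 - s)) (P (B (u s)))‖
                    ≤ (crd * ‖B (u s)‖) * G (t - 1 - s) := hAkP _ _
                  _ ≤ (crd * uB) * G (t - 1 - s) := by
                      refine mul_le_mul_of_nonneg_right ?_ (hG0 _)
                      exact mul_le_mul_of_nonneg_left (huB s) (le_of_lt hcrd0)
            _ = (crd * uB) * ∑ s ∈ Finset.range t, G (t - 1 - s) := by
                rw [← Finset.mul_sum]
            _ = (crd * uB) * ∑ k ∈ Finset.range t, G k := by
                rw [Finset.sum_range_reflect]
            _ ≤ crd * uB * tG := by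
                refine mul_le_mul_of_nonneg_left (hGrange t) ?_
                exact mul_nonneg (le_of_lt hcrd0) (by linarith)
      _ = M := hM.symm
  -- stable coordinates are preserved by P
  have hreprP : ∀ (z : Fin n → ℂ) (i : Fin n), i ∈ Sf → v.repr (P z) i = v.repr z i := by
    intro z i hi
    rw [hP z, map_sum, Finset.sum_apply']
    have h18 : ∀ j ∈ Sf, (v.repr (v.repr z j • v j)) i = if j = i then v.repr z j else 0 := by
      intro j _
      rw [map_smul, Finsupp.smul_apply, Basis.repr_self, Finsupp.single_apply]
      split_ifs with h
      · rw [smul_eq_mul, mul_one]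
      · rw [smul_eq_mul, mul_zero]
    rw [Finset.sum_congr rfl h18, Finset.sum_ite_eq' Sf i (fun j => v.repr z j), if_pos hi]
  set b1 : ℝ := 1 + (n : ℝ) * (crd * M) with hb1def
  have hb1pos : 0 < b1 := by
    have h19 : 0 ≤ (n : ℝ) * (crd * M) :=
      mul_nonneg (Nat.cast_nonneg n) (mul_nonneg (le_of_lt hcrd0) hM0)
    rw [hb1def]; linarith
  have hstab : ∀ t : ℕ, ∑ i ∈ Sf, ‖v.repr (x t) i‖ ≤ b1 := by
    intro t
    calc ∑ i ∈ Sf, ‖v.repr (x t) i‖ ≤ ∑ _i ∈ Sf, crd * M := by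
          refine Finset.sum_le_sum fun i hi => ?_
          rw [← hreprP (x t) i hi]
          calc ‖v.repr (P (x t)) i‖ ≤ crd * ‖P (x t)‖ := hcrdle _ _
            _ ≤ crd * M := mul_le_mul_of_nonneg_left (hPx t) (le_of_lt hcrd0)
      _ = (Sf.card : ℝ) * (crd * M) := by rw [Finset.sum_const]; simp [nsmul_eq_mul]
      _ ≤ (n : ℝ) * (crd * M) := by
          refine mul_le_mul_of_nonneg_right ?_ (mul_nonneg (le_of_lt hcrd0) hM0)
          have h16 : Sf.card ≤ n := by
            calc Sf.card ≤ (Finset.univ : Finset (Fin n)).card :=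
                  Finset.card_le_card (by rw [hSf]; exact Finset.filter_subset _ _)
              _ = n := by rw [Finset.card_univ, Fintype.card_fin]
          exact_mod_cast h16
      _ ≤ 1 + (n : ℝ) * (crd * M) := by linarith
      _ = b1 := hb1def.symm
  -- inner-sum bound
  have hW : ∀ (T : ℕ), n ≤ T → ∀ i : Fin n, ‖lam i‖ < 1 →
      ‖∑ j ∈ Finset.univ.filter (fun j => lam j = lam i),
        (lam i ^ T * (pp j i).eval (T : ℂ)) • C (v j)‖
      ≤ (n : ℝ) * η * (κ0 * (T : ℝ) ^ n * ρ ^ T) := by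
    intro T hT i hi
    have hη0 : 0 ≤ η := le_trans (norm_nonneg _) (hη i)
    have hbT : 0 ≤ κ0 * (T : ℝ) ^ n * ρ ^ T :=
      mul_nonneg (mul_nonneg (le_of_lt hκ0pos) (pow_nonneg (Nat.cast_nonneg T) n))
        (pow_nonneg hρ0 T)
    calc ‖∑ j ∈ Finset.univ.filter (fun j => lam j = lam i),
          (lam i ^ T * (pp j i).eval (T : ℂ)) • C (v j)‖
        ≤ ∑ j ∈ Finset.univ.filter (fun j => lam j = lam i),
          ‖(lam i ^ T * (pp j i).eval (T : ℂ)) • C (v j)‖ := norm_sum_le _ _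
      _ ≤ ∑ _j ∈ Finset.univ.filter (fun j => lam j = lam i),
          (κ0 * (T : ℝ) ^ n * ρ ^ T) * η := by
          refine Finset.sum_le_sum fun j _ => ?_
          rw [norm_smul]
          exact mul_le_mul (hbnd i j T hT hi) (hη j) (norm_nonneg _) hbT
      _ = ((Finset.univ.filter (fun j => lam j = lam i)).card : ℝ) *
          ((κ0 * (T : ℝ) ^ n * ρ ^ T) * η) := by
          rw [Finset.sum_const]; simp [nsmul_eq_mul]
      _ ≤ (n : ℝ) * ((κ0 * (T : ℝ) ^ n * ρ ^ T) * η) := by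
          refine mul_le_mul_of_nonneg_right ?_ (mul_nonneg hbT hη0)
          have h16 : (Finset.univ.filter (fun j => lam j = lam i)).card ≤ n := by
            calc (Finset.univ.filter (fun j => lam j = lam i)).card
                ≤ (Finset.univ : Finset (Fin n)).card :=
                  Finset.card_le_card (Finset.filter_subset _ _)
              _ = n := by rw [Finset.card_univ, Fintype.card_fin]
          exact_mod_cast h16
      _ = (n : ℝ) * η * (κ0 * (T : ℝ) ^ n * ρ ^ T) := by ring
  -- the main bound
  have hbound : ∀ T : ℕ, n ≤ T → ∀ t : ℕ,
      ‖C ((A ^ T) (x t))‖ ≤ b1 * κ0 * n * η * (T : ℝ) ^ n * ρ ^ T := by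
    intro T hT t
    rcases Nat.eq_zero_or_pos n with hn | hn
    · subst hn
      have hz : (A ^ T) (x t) = 0 := Subsingleton.elim _ _
      rw [hz, map_zero, norm_zero]
      norm_num
    · have hη0 : 0 ≤ η := le_trans (norm_nonneg _) (hη ⟨0, hn⟩)
      have hbT : 0 ≤ κ0 * (T : ℝ) ^ n * ρ ^ T :=
        mul_nonneg (mul_nonneg (le_of_lt hκ0pos) (pow_nonneg (Nat.cast_nonneg T) n))
          (pow_nonneg hρ0 T)
      rw [hCim T hT (x t)]
      calc ‖∑ i ∈ Sf, v.repr (x t) i •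
            ∑ j ∈ Finset.univ.filter (fun j => lam j = lam i),
              (lam i ^ T * (pp j i).eval (T : ℂ)) • C (v j)‖
          ≤ ∑ i ∈ Sf, ‖v.repr (x t) i •
            ∑ j ∈ Finset.univ.filter (fun j => lam j = lam i),
              (lam i ^ T * (pp j i).eval (T : ℂ)) • C (v j)‖ := norm_sum_le _ _
        _ ≤ ∑ i ∈ Sf, ‖v.repr (x t) i‖ * ((n : ℝ) * η * (κ0 * (T : ℝ) ^ n * ρ ^ T)) := by
            refine Finset.sum_le_sum fun i hi => ?_
            rw [norm_smul]
            have hi' : ‖lam i‖ < 1 := by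
              rw [hSf] at hi
              exact (Finset.mem_filter.mp hi).2
            exact mul_le_mul_of_nonneg_left (hW T hT i hi') (norm_nonneg _)
        _ = (∑ i ∈ Sf, ‖v.repr (x t) i‖) * ((n : ℝ) * η * (κ0 * (T : ℝ) ^ n * ρ ^ T)) := by
            rw [← Finset.sum_mul]
        _ ≤ b1 * ((n : ℝ) * η * (κ0 * (T : ℝ) ^ n * ρ ^ T)) := by
            refine mul_le_mul_of_nonneg_right (hstab t) ?_
            exact mul_nonneg (mul_nonneg (Nat.cast_nonneg n) hη0) hbT
        _ = b1 * κ0 * n * η * (T : ℝ) ^ n * ρ ^ T := by ring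
  refine ⟨pp, κ0, b1, hκ0pos, hb1pos, fun T hT t => hCim T hT (x t), hbound, ?_⟩
  -- the limit claim
  intro ε hε
  rcases Nat.eq_zero_or_pos n with hn | hn
  · subst hn
    refine ⟨0, fun t => ?_⟩
    have hz : ((A ^ 0) (x t)) = 0 := Subsingleton.elim _ _
    rw [hz, map_zero, norm_zero]
    exact hε
  · have hη0 : 0 ≤ η := le_trans (norm_nonneg _) (hη ⟨0, hn⟩)
    have htend : Filter.Tendsto (fun T : ℕ => (b1 * κ0 * n * η) * ((T : ℝ) ^ n * ρ ^ T))
        Filter.atTop (nhds 0) := by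
      have h0 : Filter.Tendsto (fun T : ℕ => (T : ℝ) ^ n * ρ ^ T) Filter.atTop (nhds 0) :=
        hsum1.tendsto_atTop_zero
      have h1 := h0.const_mul (b1 * κ0 * n * η)
      simpa using h1
    have hev := (htend.eventually (gt_mem_nhds hε)).and (Filter.eventually_ge_atTop n)
    obtain ⟨T, hT1, hT2⟩ := hev.exists
    refine ⟨T, fun t => ?_⟩
    calc ‖C ((A ^ T) (x t))‖ ≤ b1 * κ0 * n * η * (T : ℝ) ^ n * ρ ^ T := hbound T hT2 t
      _ = (b1 * κ0 * n * η) * ((T : ℝ) ^ n * ρ ^ T) := by ring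
      _ < ε := hT1
end

section
/- Let \(P \subset \mathcal{U}^{\mathbb{N}} \times \mathcal{Y}^{\mathbb{N}}\) with \(|\mathcal{U}| < \infty\), \(1 < |\mathcal{Y}| < \infty\). Suppose there exists an unobservable family \(\Psi = \{\{(\{u^{(k,j)}_t\}_{t=0}^{T_{(k,j)}}, \{y^{(k,j)}_t\}_{t=0}^{T_{(k,j)}})\}_{j=1}^{2^k}\}_{k=1}^{\infty}\) of input-output segments satisfying: (i) for each \(k,j\), the sibling pair \((k,2j-1)\) and \((k,2j)\) has equal horizons, identical inputs throughout and identical outputs up to time \(T_{(k,2j-1)}-1\), but differing outputs at time \(T_{(k,2j-1)}\); (ii) each child segment extends its parent segment \((k-1,j)\) with strictly larger horizon; (iii) every infinite branch through the binary tree concatenates to a valid behavior \((\mathbf{u},\mathbf{y}) \in P\). Then \(P\) is not weakly output observable. -/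
/-- A candidate observer. -/
structure Observer (E F Q : Type*) where
  f : Q → E → F → Q
  g : Q → E → F
  q0 : Q

def Observer.state {E F Q : Type*} (S : Observer E F Q) (u : ℕ → E) (y : ℕ → F) : ℕ → Q
  | 0 => S.q0
  | t + 1 => S.f (Observer.state S u y t) (u t) (y t)

def Observer.est {E F Q : Type*} (S : Observer E F Q) (u : ℕ → E) (y : ℕ → F) (t : ℕ) : F :=
  S.g (Observer.state S u y t) (u t)

/-- `γ` is an observation gain bound of `(P, Ŝ)`. -/
def IsGainBound {E F : Type*} [NormedAddCommGroup E] [NormedAddCommGroup F]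
    (P : Set ((ℕ → E) × (ℕ → F))) {Q : Type*} (S : Observer E F Q) (γ : ℝ) : Prop :=
  ∀ uy ∈ P, ∃ M : ℝ, ∀ T : ℕ,
    ∑ t ∈ Finset.range (T + 1), (‖uy.2 t - Observer.est S uy.1 uy.2 t‖ - γ * ‖uy.1 t‖) ≤ M

/-- `P` is weakly output observable (observers take outputs in the alphabet `Ys`). -/
def WeaklyOutputObservable {E F : Type*} [NormedAddCommGroup E] [NormedAddCommGroup F]
    (P : Set ((ℕ → E) × (ℕ → F))) (Ys : Set F) : Prop :=
  ∃ (Q : Type) (S : Observer E F Q), (∀ q u, S.g q u ∈ Ys) ∧ IsGainBound P S 0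

lemma Observer.state_congr {E F Q : Type*} (S : Observer E F Q)
    {u u' : ℕ → E} {y y' : ℕ → F} :
    ∀ t, (∀ s, s < t → u s = u' s) → (∀ s, s < t → y s = y' s) →
      S.state u y t = S.state u' y' t
  | 0, _, _ => rfl
  | t + 1, hu, hy => by
      simp only [Observer.state, S.state_congr t (fun s hs => hu s (hs.trans (Nat.lt_succ_self t)))
        (fun s hs => hy s (hs.trans (Nat.lt_succ_self t))), hu t (Nat.lt_succ_self t),
        hy t (Nat.lt_succ_self t)]

lemma Observer.est_congr {E F Q : Type*} (S : Observer E F Q)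
    {u u' : ℕ → E} {y y' : ℕ → F} {t : ℕ}
    (hu : ∀ s, s ≤ t → u s = u' s) (hy : ∀ s, s < t → y s = y' s) :
    S.est u y t = S.est u' y' t := by
  unfold Observer.est
  rw [S.state_congr t (fun s hs => hu s hs.le) hy, hu t le_rfl]

open Classical in
noncomputable def obsBranch {E F Q : Type*} (S : Observer E F Q)
    (Tk : ℕ → ℕ → ℕ) (useg : ℕ → ℕ → ℕ → E) (yseg : ℕ → ℕ → ℕ → F) : ℕ → ℕ
  | 0 => 1
  | k + 1 =>
    let j := obsBranch S Tk useg yseg k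
    if yseg (k+1) (2*j) (Tk (k+1) (2*j)) =
        S.est (useg (k+1) (2*j)) (yseg (k+1) (2*j)) (Tk (k+1) (2*j))
    then 2*j - 1 else 2*j

/-- If a system `P` over finite alphabets (`|𝒰| < ∞`, `1 < |𝒴| < ∞`) admits an unobservable
family `Ψ` of input-output segments — a binary tree where (i) sibling segments have equal
horizons, identical inputs, identical outputs except at the final time where they differ;
(ii) each child extends its parent with strictly larger horizon; and (iii) every infinite
branch concatenates to a valid behavior of `P` — then `P` is not weakly output observable. -/
theorem stmt_14 {E F : Type*} [NormedAddCommGroup E] [NormedAddCommGroup F]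
    (P : Set ((ℕ → E) × (ℕ → F))) (Us : Finset E) (Ys : Finset F) (hYs : 1 < Ys.card)
    (hP : ∀ uy ∈ P, (∀ t : ℕ, uy.1 t ∈ Us) ∧ (∀ t : ℕ, uy.2 t ∈ Ys))
    (Tk : ℕ → ℕ → ℕ) (useg : ℕ → ℕ → ℕ → E) (yseg : ℕ → ℕ → ℕ → F)
    (hyYs : ∀ k j t, yseg k j t ∈ Ys)
    (hi : ∀ k, 1 ≤ k → ∀ j, 1 ≤ j → j ≤ 2 ^ (k - 1) →
      Tk k (2 * j - 1) = Tk k (2 * j) ∧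
      (∀ t, t ≤ Tk k (2 * j - 1) → useg k (2 * j - 1) t = useg k (2 * j) t) ∧
      (∀ t, t < Tk k (2 * j - 1) → yseg k (2 * j - 1) t = yseg k (2 * j) t) ∧
      yseg k (2 * j - 1) (Tk k (2 * j - 1)) ≠ yseg k (2 * j) (Tk k (2 * j - 1)))
    (hii : ∀ k, 2 ≤ k → ∀ j, 1 ≤ j → j ≤ 2 ^ (k - 1) →
      Tk (k - 1) j < Tk k (2 * j) ∧
      ∀ t, t ≤ Tk (k - 1) j →
        useg k (2 * j) t = useg (k - 1) j t ∧ yseg k (2 * j) t = yseg (k - 1) j t)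
    (hiii : ∀ jfun : ℕ → ℕ,
      (∀ k, 1 ≤ k → 1 ≤ jfun k ∧ jfun k ≤ 2 ^ k) →
      (∀ k, 1 ≤ k → jfun (k + 1) = 2 * jfun k - 1 ∨ jfun (k + 1) = 2 * jfun k) →
      ∀ (u : ℕ → E) (y : ℕ → F),
        (∀ t, t ≤ Tk 1 (jfun 1) → u t = useg 1 (jfun 1) t ∧ y t = yseg 1 (jfun 1) t) →
        (∀ k, 2 ≤ k → ∀ t, Tk (k - 1) (jfun (k - 1)) < t → t ≤ Tk k (jfun k) →
          u t = useg k (jfun k) t ∧ y t = yseg k (jfun k) t) →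
        (u, y) ∈ P) :
    ¬ WeaklyOutputObservable P (Ys : Set F) := by
  classical
  rintro ⟨Q, S, hg, hb⟩
  set J : ℕ → ℕ := obsBranch S Tk useg yseg with hJdef
  -- basic characterization of the recursion
  have hJ0 : J 0 = 1 := rfl
  have hJif : ∀ k, (yseg (k+1) (2*J k) (Tk (k+1) (2*J k)) =
        S.est (useg (k+1) (2*J k)) (yseg (k+1) (2*J k)) (Tk (k+1) (2*J k)) →
        J (k+1) = 2 * J k - 1) ∧
      (yseg (k+1) (2*J k) (Tk (k+1) (2*J k)) ≠
        S.est (useg (k+1) (2*J k)) (yseg (k+1) (2*J k)) (Tk (k+1) (2*J k)) →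
        J (k+1) = 2 * J k) := by
    intro k
    constructor <;> intro hc <;>
      · show obsBranch S Tk useg yseg (k+1) = _
        rw [obsBranch]
        simp only [hJdef] at hc ⊢
        first
          | rw [if_pos hc]
          | rw [if_neg hc]
  have hch : ∀ k, J (k+1) = 2 * J k - 1 ∨ J (k+1) = 2 * J k := by
    intro k
    by_cases hc : yseg (k+1) (2*J k) (Tk (k+1) (2*J k)) =
        S.est (useg (k+1) (2*J k)) (yseg (k+1) (2*J k)) (Tk (k+1) (2*J k))
    · exact Or.inl ((hJif k).1 hc)
    · exact Or.inr ((hJif k).2 hc)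
  -- bounds invariant
  have hJb : ∀ k, 1 ≤ J k ∧ J k ≤ 2 ^ k := by
    intro k
    induction k with
    | zero => simp [hJ0]
    | succ k ih =>
      rcases hch k with h | h <;> rw [h] <;>
        constructor <;> [omega; (rw [pow_succ]; omega); omega; (rw [pow_succ]; omega)]
  -- sibling facts at level k+1 with parent J k
  have hsib : ∀ k, Tk (k+1) (2 * J k - 1) = Tk (k+1) (2 * J k) ∧
      (∀ t, t ≤ Tk (k+1) (2 * J k - 1) →
        useg (k+1) (2 * J k - 1) t = useg (k+1) (2 * J k) t) ∧
      (∀ t, t < Tk (k+1) (2 * J k - 1) →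
        yseg (k+1) (2 * J k - 1) t = yseg (k+1) (2 * J k) t) ∧
      yseg (k+1) (2 * J k - 1) (Tk (k+1) (2 * J k - 1)) ≠
        yseg (k+1) (2 * J k) (Tk (k+1) (2 * J k - 1)) := by
    intro k
    have h := hi (k+1) (by omega) (J k) (hJb k).1 (by simpa using (hJb k).2)
    exact h
  have hT : ∀ k, Tk (k+1) (J (k+1)) = Tk (k+1) (2 * J k) := by
    intro k
    rcases hch k with h | h <;> rw [h]
    · exact (hsib k).1
  -- parent extension facts
  have hext : ∀ k, 1 ≤ k → Tk k (J k) < Tk (k+1) (2 * J k) ∧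
      ∀ t, t ≤ Tk k (J k) →
        useg (k+1) (2 * J k) t = useg k (J k) t ∧
        yseg (k+1) (2 * J k) t = yseg k (J k) t := by
    intro k hk
    have h := hii (k+1) (by omega) (J k) (hJb k).1 (by simpa using (hJb k).2)
    simpa using h
  have hgrow : ∀ k, 1 ≤ k → Tk k (J k) < Tk (k+1) (J (k+1)) := by
    intro k hk
    rw [hT k]
    exact (hext k hk).1
  have hmono : ∀ k, 1 ≤ k → ∀ m, Tk k (J k) ≤ Tk (k+m) (J (k+m)) := by
    intro k hk m
    induction m with
    | zero => exact le_rfl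
    | succ m ih => exact ih.trans (hgrow (k+m) (by omega)).le
  -- child agrees with parent on parent's horizon (whichever sibling chosen)
  have hpar : ∀ k, 1 ≤ k → ∀ t, t ≤ Tk k (J k) →
      useg (k+1) (J (k+1)) t = useg k (J k) t ∧
      yseg (k+1) (J (k+1)) t = yseg k (J k) t := by
    intro k hk t ht
    have h2 := (hext k hk).2 t ht
    have hlt : t < Tk (k+1) (2 * J k) := lt_of_le_of_lt ht (hext k hk).1
    rcases hch k with h | h <;> rw [h]
    · obtain ⟨hTeq, huag, hyag, -⟩ := hsib k
      have hlt' : t < Tk (k+1) (2 * J k - 1) := by rw [hTeq]; exact hlt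
      exact ⟨(huag t hlt'.le).trans h2.1, (hyag t hlt').trans h2.2⟩
    · exact h2
  have hchain : ∀ k, 1 ≤ k → ∀ m, ∀ t, t ≤ Tk k (J k) →
      useg (k+m) (J (k+m)) t = useg k (J k) t ∧
      yseg (k+m) (J (k+m)) t = yseg k (J k) t := by
    intro k hk m
    induction m with
    | zero => exact fun t _ => ⟨rfl, rfl⟩
    | succ m ih =>
      intro t ht
      have h1 := hpar (k+m) (by omega) t (ht.trans (hmono k hk m))
      have h2 := ih t ht
      exact ⟨h1.1.trans h2.1, h1.2.trans h2.2⟩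
  have hTge : ∀ k, 1 ≤ k → k - 1 ≤ Tk k (J k) := by
    intro k
    induction k with
    | zero => omega
    | succ k ih =>
      intro _
      rcases Nat.eq_zero_or_pos k with h | h
      · omega
      · have := hgrow k h
        have := ih h
        omega
  -- the branch behavior
  set u : ℕ → E := fun t => useg (t+1) (J (t+1)) t with hu
  set y : ℕ → F := fun t => yseg (t+1) (J (t+1)) t with hy
  have hcons : ∀ k, 1 ≤ k → ∀ t, t ≤ Tk k (J k) →
      u t = useg k (J k) t ∧ y t = yseg k (J k) t := by
    intro k hk t ht
    have htT : t ≤ Tk (t+1) (J (t+1)) := by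
      have := hTge (t+1) (by omega); omega
    rcases le_or_gt (t+1) k with h | h
    · obtain ⟨m, rfl⟩ := Nat.exists_eq_add_of_le h
      have := hchain (t+1) (by omega) m t htT
      exact ⟨this.1.symm, this.2.symm⟩
    · obtain ⟨m, hm⟩ := Nat.exists_eq_add_of_le h.le
      have := hchain k hk m t ht
      rw [← hm] at this
      exact this
  have hmem : (u, y) ∈ P :=
    hiii J (fun k _ => hJb k) (fun k _ => hch k) u y
      (fun t ht => hcons 1 le_rfl t ht)
      (fun k hk t _ ht => hcons k (by omega) t ht)
  -- the observer errs at every branching time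
  have herr : ∀ k, y (Tk (k+1) (J (k+1))) ≠ S.est u y (Tk (k+1) (J (k+1))) := by
    intro k
    set T := Tk (k+1) (2 * J k) with hTdef
    have hTJ : Tk (k+1) (J (k+1)) = T := hT k
    have hu' : ∀ s, s ≤ T → u s = useg (k+1) (2 * J k) s := by
      intro s hs
      have h1 := (hcons (k+1) (by omega) s (by rw [hTJ]; exact hs)).1
      rcases hch k with h | h
      · rw [h1, h]
        exact (hsib k).2.1 s (by rw [(hsib k).1]; exact hs)
      · rw [h1, h]
    have hy' : ∀ s, s < T → y s = yseg (k+1) (2 * J k) s := by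
      intro s hs
      have h1 := (hcons (k+1) (by omega) s (by rw [hTJ]; exact hs.le)).2
      rcases hch k with h | h
      · rw [h1, h]
        exact (hsib k).2.2.1 s (by rw [(hsib k).1]; exact hs)
      · rw [h1, h]
    have hest : S.est u y T = S.est (useg (k+1) (2 * J k)) (yseg (k+1) (2 * J k)) T :=
      S.est_congr hu' hy'
    have hyT : y T = yseg (k+1) (J (k+1)) T :=
      (hcons (k+1) (by omega) T (le_of_eq hTJ.symm)).2
    rw [hTJ, hest, hyT]
    by_cases hc : yseg (k+1) (2 * J k) T =
        S.est (useg (k+1) (2 * J k)) (yseg (k+1) (2 * J k)) T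
    · rw [(hJif k).1 hc, ← hc]
      have := (hsib k).2.2.2
      rw [(hsib k).1] at this
      exact this
    · rw [(hJif k).2 hc]
      exact hc
  -- membership of outputs and estimates in the alphabet
  have hyY : ∀ t, y t ∈ Ys := fun t => hyYs (t+1) (J (t+1)) t
  have hestY : ∀ t, S.est u y t ∈ Ys := fun t => hg _ _
  -- minimal positive gap in the alphabet
  set D : Finset ℝ := ((Ys ×ˢ Ys).filter fun p => p.1 ≠ p.2).image fun p => ‖p.1 - p.2‖
    with hD
  obtain ⟨a, ha, b, hbY, hab⟩ := Finset.one_lt_card.mp hYs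
  have hDne : D.Nonempty := ⟨‖a - b‖, Finset.mem_image.mpr
    ⟨(a, b), Finset.mem_filter.mpr ⟨Finset.mk_mem_product ha hbY, hab⟩, rfl⟩⟩
  set δ : ℝ := D.min' hDne with hδ
  have hδpos : 0 < δ := by
    obtain ⟨p, hp, hpe⟩ := Finset.mem_image.mp (D.min'_mem hDne)
    have hne : p.1 ≠ p.2 := (Finset.mem_filter.mp hp).2
    rw [hδ, ← hpe]
    exact norm_pos_iff.mpr (sub_ne_zero.mpr hne)
  have hδle : ∀ t, y t ≠ S.est u y t → δ ≤ ‖y t - S.est u y t‖ := by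
    intro t hne
    exact D.min'_le _ (Finset.mem_image.mpr
      ⟨(y t, S.est u y t), Finset.mem_filter.mpr
        ⟨Finset.mk_mem_product (hyY t) (hestY t), hne⟩, rfl⟩)
  -- gain bound gives a contradiction
  obtain ⟨M, hM⟩ := hb (u, y) hmem
  have hM' : ∀ T : ℕ, ∑ t ∈ Finset.range (T + 1), ‖y t - S.est u y t‖ ≤ M := by
    intro T
    have := hM T
    simpa using this
  set N : ℕ := ⌈M / δ⌉₊ + 1 with hN
  set Efun : ℕ → ℕ := fun k => Tk (k+1) (J (k+1)) with hE
  have hEmono : StrictMono Efun := strictMono_nat_of_lt_succ fun k => hgrow (k+1) (by omega)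
  set TT : ℕ := Efun N with hTT
  have hsum : (N + 1 : ℝ) * δ ≤ ∑ t ∈ Finset.range (TT + 1), ‖y t - S.est u y t‖ := by
    have hsub : (Finset.range (N+1)).image Efun ⊆ Finset.range (TT + 1) := by
      intro t ht
      obtain ⟨k, hk, rfl⟩ := Finset.mem_image.mp ht
      rw [Finset.mem_range] at hk ⊢
      have : Efun k ≤ Efun N := hEmono.monotone (by omega)
      omega
    calc (N + 1 : ℝ) * δ
        = ∑ _k ∈ Finset.range (N+1), δ := by
          rw [Finset.sum_const, nsmul_eq_mul, Finset.card_range]; push_cast; ring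
      _ ≤ ∑ k ∈ Finset.range (N+1), ‖y (Efun k) - S.est u y (Efun k)‖ :=
          Finset.sum_le_sum fun k _ => hδle (Efun k) (herr k)
      _ = ∑ t ∈ (Finset.range (N+1)).image Efun, ‖y t - S.est u y t‖ := by
          rw [Finset.sum_image fun x _ x' _ h => hEmono.injective h]
      _ ≤ ∑ t ∈ Finset.range (TT + 1), ‖y t - S.est u y t‖ :=
          Finset.sum_le_sum_of_subset_of_nonneg hsub fun t _ _ => norm_nonneg _
  have hMN : M < (N + 1 : ℝ) * δ := by
    have h1 : M / δ ≤ (⌈M / δ⌉₊ : ℝ) := Nat.le_ceil _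
    have h2 : M ≤ (⌈M / δ⌉₊ : ℝ) * δ := by
      rw [div_le_iff₀ hδpos] at h1; exact h1
    have h3 : ((⌈M / δ⌉₊ : ℝ)) * δ < (N + 1 : ℝ) * δ := by
      apply mul_lt_mul_of_pos_right _ hδpos
      rw [hN]; push_cast; linarith
    linarith
  exact absurd (hsum.trans (hM' TT)) (not_le.mpr hMN)
end
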